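/- Uniqueness of the Leibniz rule solution: let (y_n)_{n≥1} be positive reals with y_1 > 0 and let q_n be polynomials with q_0 = 1, q_1(η) = η, q_n(1) = 1 for all n. If the quantities ϖ_k^n(η) = ((y_1⋯y_n)/((y_1⋯y_k)(y_1⋯y_{n−k}))) q_k(η) q_{n−k}(1−η) satisfy ϖ_k^{n−1} = ϖ_k^n + ϖ_{k+1}^n for all n ≥ 1, 0 ≤ k ≤ n−1 and all η, then either there exists α with y_k/y_1 = α/(k−1+α) and q_n(η) = ∏_{k=1}^n (k−1+αη)/(k−1+α), or y_k/y_1 = 1 for all k and q_n(η) = η^n. -/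

import Mathlib

open Finset

/-- Deformed factorial `y_n! = y_1 y_2 ⋯ y_n`, with `y_0! = 1`. -/
noncomputable def yfac (y : ℕ → ℝ) (n : ℕ) : ℝ := ∏ k ∈ Finset.Icc 1 n, y k

theorem stmt17 (y : ℕ → ℝ) (hy : ∀ n, 1 ≤ n → 0 < y n)
    (q : ℕ → ℝ → ℝ)
    (hqpoly : ∀ n, ∃ P : Polynomial ℝ, ∀ η, q n η = P.eval η)
    (hq0 : ∀ η, q 0 η = 1)
    (hq1 : ∀ η : ℝ, q 1 η = η)
    (hqone : ∀ n, q n 1 = 1)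
    (ϖ : ℕ → ℕ → ℝ → ℝ)
    (hϖ : ∀ n k η, ϖ n k η =
      (yfac y n / (yfac y k * yfac y (n - k))) * q k η * q (n - k) (1 - η))
    (hleib : ∀ n, 1 ≤ n → ∀ k ≤ n - 1, ∀ η : ℝ, ϖ (n - 1) k η = ϖ n k η + ϖ n (k + 1) η) :
    (∃ α : ℝ,
      (∀ k, 1 ≤ k → y k / y 1 = α / ((k : ℝ) - 1 + α)) ∧
      (∀ (n : ℕ) (η : ℝ),
        q n η = ∏ k ∈ Finset.Icc 1 n, (((k : ℝ) - 1 + α * η) / ((k : ℝ) - 1 + α)))) ∨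
    ((∀ k, 1 ≤ k → y k / y 1 = 1) ∧ ∀ (n : ℕ) (η : ℝ), q n η = η ^ n) := by
  have hy1 : 0 < y 1 := hy 1 le_rfl
  have hyfacpos : ∀ n, 0 < yfac y n := by
    intro n
    exact Finset.prod_pos (fun k hk => hy k (Finset.mem_Icc.mp hk).1)
  have hyfac0 : yfac y 0 = 1 := by simp [yfac]
  have hyfac1 : yfac y 1 = y 1 := by simp [yfac]
  have hyfacsucc : ∀ n, yfac y (n+1) = yfac y n * y (n+1) := by
    intro n
    rw [yfac, yfac, Finset.prod_Icc_succ_top (Nat.le_add_left 1 n)]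
  -- the basic recurrence from the k = 0 case of the Leibniz rule
  have hrec : ∀ n, 1 ≤ n → ∀ t : ℝ, q n t = q (n-1) t * (1 + (y n / y 1) * (t - 1)) := by
    intro n hn t
    have h := hleib n hn 0 (Nat.zero_le _) (1 - t)
    rw [hϖ, hϖ, hϖ] at h
    simp only [Nat.sub_zero, hq0, hq1, hyfac0] at h
    obtain ⟨m, rfl⟩ : ∃ m, n = m + 1 := ⟨n-1, by omega⟩
    simp only [Nat.add_sub_cancel] at h ⊢
    rw [hyfacsucc, hyfac1] at h
    have h1 : (1:ℝ) - (1 - t) = t := by ring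
    rw [h1] at h
    have hA := (hyfacpos m).ne'
    have hym : y (m+1) ≠ 0 := (hy _ (by omega)).ne'
    field_simp [hym] at h
    have h2 : (q m t * y 1 - q (m+1) t * y 1 - y (m+1)*(1-t)*q m t) * yfac y m = 0 := by
      linear_combination (yfac y m) * h
    have h3 := (mul_eq_zero.mp h2).resolve_right hA
    field_simp
    linear_combination -h3
  -- product formula for q
  have hprod : ∀ n, ∀ t : ℝ, q n t = ∏ j ∈ Finset.Icc 1 n, (1 + y j / y 1 * (t-1)) := by
    intro n
    induction n with
    | zero => intro t; simp [hq0]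
    | succ m ih =>
      intro t
      have h := hrec (m+1) (by omega) t
      rw [Nat.add_sub_cancel] at h
      rw [h, ih, Finset.prod_Icc_succ_top (Nat.le_add_left 1 m)]
  have hqpos : ∀ n, 0 < q n 2 := by
    intro n
    rw [hprod]
    apply Finset.prod_pos
    intro j hj
    have := hy j (Finset.mem_Icc.mp hj).1
    have : 0 < y j / y 1 := div_pos this hy1
    nlinarith
  -- the Cauchy–Pexider relation from the k = 1 case
  have hs : ∀ n, 2 ≤ n → y 1 / y n = y 1 / y (n-1) + y 1 / y 2 - 1 := by
    intro n hn
    obtain ⟨m, rfl⟩ : ∃ m, n = m + 2 := ⟨n-2, by omega⟩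
    have h := hleib (m+2) (by omega) 1 (by omega) (-1)
    rw [hϖ, hϖ, hϖ] at h
    have e1 : m + 2 - 1 = m + 1 := rfl
    have e2 : m + 1 - 1 = m := rfl
    have e3 : m + 2 - 2 = m := by omega
    rw [e1, e2, e3] at h
    have e4 : (1:ℝ) - (-1) = 2 := by norm_num
    rw [e4, hq1] at h
    have hq2 : q 2 (-1) = -(1 - 2 * (y 2 / y 1)) := by
      rw [hrec 2 (by omega) (-1)]
      rw [hq1]; ring
    have hqm1 : q (m+1) 2 = q m 2 * (1 + y (m+1) / y 1) := by
      have := hrec (m+1) (by omega) 2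
      rw [e2] at this; rw [this]; ring_nf
    rw [hq2, hqm1] at h
    rw [hyfacsucc (m+1), hyfacsucc m, hyfac1, show (2:ℕ) = 1 + 1 from rfl,
      hyfacsucc 1, hyfac1] at h
    have hA := (hyfacpos m).ne'
    have h1 := hy1.ne'
    have h2' := (hy 2 (by omega)).ne'
    have hm1 := (hy (m+1) (by omega)).ne'
    have hm2 := (hy (m+2) (by omega)).ne'
    have hQ := (hqpos m).ne'
    field_simp at h
    have h3 : (y 1 * y 2 * y (m+1) - y (m+2) * (y 1 * y 2 - y 2 * y (m+1) + y 1 * y (m+1))) *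
        (yfac y m ^ 3 * q m 2 * y 1 ^ 3 * y (m+1)) = 0 := by
      rw [show (1 + 1 : ℕ) = 2 from rfl, show m + 1 + 1 = m + 2 from rfl] at h
      linear_combination (-(yfac y m ^ 3 * q m 2 * y 1 ^ 3 * y (m+1))) * h
    have h4 : yfac y m ^ 3 * q m 2 * y 1 ^ 3 * y (m+1) ≠ 0 := by positivity
    have h5 := (mul_eq_zero.mp h3).resolve_right h4
    rw [show m + 2 - 1 = m + 1 from rfl]
    field_simp
    linear_combination h5
  -- linear solution of the Pexider equation
  obtain ⟨μ, hμdef⟩ : ∃ μ : ℝ, μ = y 1 / y 2 - 1 := ⟨_, rfl⟩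
  have hslin : ∀ n, 1 ≤ n → y 1 / y n = 1 + ((n:ℝ) - 1) * μ := by
    intro n hn
    induction n with
    | zero => omega
    | succ m ih =>
      rcases Nat.lt_or_ge m 1 with hm | hm
      · interval_cases m
        · simp [div_self hy1.ne']
      · have h := hs (m+1) (by omega)
        rw [Nat.add_sub_cancel] at h
        rw [h, ih hm, show y 1 / y 2 = μ + 1 by rw [hμdef]; ring]
        push_cast
        ring
  -- `1/(y k / y 1) = 1 + (k-1) μ` in invertible form
  have hyk : ∀ k, 1 ≤ k → y k / y 1 = 1 / (1 + ((k:ℝ) - 1) * μ) := by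
    intro k hk
    have h := hslin k hk
    have hk0 := (hy k hk).ne'
    have hpos : 0 < 1 + ((k:ℝ) - 1) * μ := by
      have : (0:ℝ) < y 1 / y k := div_pos hy1 (hy k hk)
      rwa [h] at this
    rw [eq_div_iff hpos.ne', ← h]
    field_simp
  by_cases hμ : μ = 0
  · right
    have hr1 : ∀ k, 1 ≤ k → y k / y 1 = 1 := by
      intro k hk
      rw [hyk k hk, hμ]
      norm_num
    refine ⟨hr1, ?_⟩
    intro n η
    rw [hprod]
    have : ∀ j ∈ Finset.Icc 1 n, (1 + y j / y 1 * (η - 1)) = η := by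
      intro j hj
      rw [hr1 j (Finset.mem_Icc.mp hj).1]
      ring
    rw [Finset.prod_congr rfl this, Finset.prod_const, Nat.card_Icc]
    norm_num
  · left
    have hposk : ∀ k : ℕ, 1 ≤ k → 0 < 1 + ((k:ℝ) - 1) * μ := by
      intro k hk
      have : (0:ℝ) < y 1 / y k := div_pos hy1 (hy k hk)
      rwa [hslin k hk] at this
    have hden : ∀ k : ℕ, 1 ≤ k → (k:ℝ) - 1 + 1/μ ≠ 0 := by
      intro k hk hc
      have h1 : ((k:ℝ) - 1) * μ = -1 := by
        field_simp at hc
        linarith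
      have := hposk k hk
      rw [h1] at this
      norm_num at this
    have hfrac : ∀ k : ℕ, 1 ≤ k →
        (1/μ) / ((k:ℝ) - 1 + 1/μ) = 1 / (1 + ((k:ℝ) - 1) * μ) := by
      intro k hk
      rw [div_eq_div_iff (hden k hk) (hposk k hk).ne']
      field_simp
      ring
    refine ⟨1/μ, ?_, ?_⟩
    · intro k hk
      rw [hyk k hk, hfrac k hk]
    · intro n η
      rw [hprod]
      apply Finset.prod_congr rfl
      intro k hk
      have hk1 := (Finset.mem_Icc.mp hk).1
      rw [hyk k hk1]
      have hpos := hposk k hk1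
      have hd := hden k hk1
      rw [eq_div_iff hd]
      field_simp
      ring
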